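/- Let L ⊆ Σ* be a regular language accepted by an NFA with matrices {A^x}, boundary vectors v_l, v_r (binary entries as constructed from the automaton). Then L is shift-invariant (i.e., uv ∈ L implies vu ∈ L for all strings u, v) if and only if v_l [a, b] v_r = 0 for all a, b in the algebra generated by {A^x}_{x∈Σ}. -/

import Mathlib

open Matrix

/-- A nondeterministic finite automaton with alphabet `α` and state type `σ`. -/
structure FinNFA (α σ : Type*) where
  step : σ → α → Finset σ
  start : Finset σ
  accept : Finset σ

/-- The type of accepting paths of the NFA `M` on the word `w`. -/
def AcceptingPath {α σ : Type*} (M : FinNFA α σ) (w : List α) : Type _ :=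
  { r : Fin (w.length + 1) → σ //
      r 0 ∈ M.start ∧ r (Fin.last w.length) ∈ M.accept ∧
      ∀ k : Fin w.length, r k.succ ∈ M.step (r k.castSucc) (w.get k) }

/-- The binary transition matrix `A^x` of the NFA, over ℂ. -/
def nfaMatC {d D : ℕ} (M : FinNFA (Fin d) (Fin D)) (x : Fin d) :
    Matrix (Fin D) (Fin D) ℂ :=
  Matrix.of fun i j => if j ∈ M.step i x then 1 else 0

/-- The indicator vector `v_l` of the initial states. -/
def vl {d D : ℕ} (M : FinNFA (Fin d) (Fin D)) : Fin D → ℂ :=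
  fun i => if i ∈ M.start then 1 else 0

/-- The indicator vector `v_r` of the accepting states. -/
def vr {d D : ℕ} (M : FinNFA (Fin d) (Fin D)) : Fin D → ℂ :=
  fun i => if i ∈ M.accept then 1 else 0

namespace Stmt5Aux
variable {d D : ℕ} (M : FinNFA (Fin d) (Fin D))

noncomputable def wordMat (w : List (Fin d)) : Matrix (Fin D) (Fin D) ℂ :=
  (w.map (nfaMatC M)).prod

@[simp] lemma wordMat_nil : wordMat M [] = 1 := rfl

lemma wordMat_cons (x : Fin d) (w : List (Fin d)) :
    wordMat M (x :: w) = nfaMatC M x * wordMat M w := by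
  simp [wordMat]

lemma wordMat_append (u v : List (Fin d)) :
    wordMat M (u ++ v) = wordMat M u * wordMat M v := by
  simp [wordMat]

instance (w : List (Fin d)) : Fintype (AcceptingPath M w) :=
  Subtype.fintype _

lemma key (w : List (Fin d)) (v : Fin D → ℂ) :
    v ⬝ᵥ (wordMat M w).mulVec (vr M) =
      ∑ r : Fin (w.length + 1) → Fin D,
        v (r 0) * (if r (Fin.last w.length) ∈ M.accept then 1 else 0) *
          ∏ k : Fin w.length,
            (if r k.succ ∈ M.step (r k.castSucc) (w.get k) then 1 else 0) := by
  induction w generalizing v with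
  | nil =>
    simp only [List.length_nil]
    rw [← Equiv.sum_comp ((Equiv.funUnique (Fin 1) (Fin D)).symm)]
    simp [vr, dotProduct, Equiv.funUnique]
  | cons x w ih =>
    rw [wordMat_cons, ← Matrix.mulVec_mulVec, Matrix.dotProduct_mulVec, ih]
    have hlen : (x :: w).length = w.length + 1 := rfl
    rw [show (∑ r : Fin ((x :: w).length + 1) → Fin D,
        v (r 0) * (if r (Fin.last (x :: w).length) ∈ M.accept then 1 else 0) *
          ∏ k : Fin (x :: w).length,
            (if r k.succ ∈ M.step (r k.castSucc) ((x :: w).get k) then 1 else 0)) =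
      ∑ p : Fin D × (Fin (w.length + 1) → Fin D),
        v ((Fin.consEquiv (fun _ : Fin (w.length + 1 + 1) => Fin D) (p.1, p.2)) 0) *
          (if (Fin.consEquiv (fun _ => Fin D) (p.1, p.2)) (Fin.last (w.length + 1)) ∈ M.accept then 1 else 0) *
          ∏ k : Fin (w.length + 1),
            (if (Fin.consEquiv (fun _ => Fin D) (p.1, p.2)) k.succ ∈
                M.step ((Fin.consEquiv (fun _ => Fin D) (p.1, p.2)) k.castSucc) ((x :: w).get k) then 1 else 0)
      from (Equiv.sum_comp (Fin.consEquiv (fun _ => Fin D)) _).symm]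
    rw [Fintype.sum_prod_type, Finset.sum_comm]
    refine Finset.sum_congr rfl fun r _ => ?_
    simp only [Fin.consEquiv_apply, Fin.cons_zero, ← Fin.succ_last, Fin.cons_succ,
      Fin.prod_univ_succ, Fin.castSucc_zero, List.get_cons_succ, ← Fin.succ_castSucc,
      List.get_cons_zero]
    have hd : (v ᵥ* nfaMatC M x) (r 0) = ∑ i : Fin D, v i * nfaMatC M x i (r 0) := rfl
    rw [hd, Finset.sum_mul, Finset.sum_mul]
    refine Finset.sum_congr rfl fun i _ => ?_
    have hg : ∀ k : Fin w.length, (x :: w).get k.succ = w.get k := by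
      intro k; simp
    simp only [hg, nfaMatC, Matrix.of_apply]
    ring


lemma count_eq (w : List (Fin d)) :
    vl M ⬝ᵥ (wordMat M w).mulVec (vr M) = (Fintype.card (AcceptingPath M w) : ℂ) := by
  rw [key]
  have h : ∀ r : Fin (w.length + 1) → Fin D,
      (vl M (r 0) * if r (Fin.last w.length) ∈ M.accept then 1 else 0) *
        ∏ k : Fin w.length, (if r k.succ ∈ M.step (r k.castSucc) (w.get k) then 1 else 0)
      = if (r 0 ∈ M.start ∧ r (Fin.last w.length) ∈ M.accept ∧
            ∀ k : Fin w.length, r k.succ ∈ M.step (r k.castSucc) (w.get k)) then (1:ℂ) else 0 := by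
    intro r
    rw [Finset.prod_boole]
    simp only [vl, Finset.mem_univ, forall_true_left]
    by_cases h1 : r 0 ∈ M.start <;> by_cases h2 : r (Fin.last w.length) ∈ M.accept <;>
      by_cases h3 : ∀ k : Fin w.length, r k.succ ∈ M.step (r k.castSucc) (w.get k) <;>
      simp [h1, h2, h3]
  simp only [h]
  rw [Finset.sum_boole]
  congr 1
  have := (Fintype.card_subtype (fun r : Fin (w.length + 1) → Fin D =>
      r 0 ∈ M.start ∧ r (Fin.last w.length) ∈ M.accept ∧
      ∀ k : Fin w.length, r k.succ ∈ M.step (r k.castSucc) (w.get k)))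
  convert this.symm using 2
  rfl

lemma mem_iff (L : Set (List (Fin d)))
    (hacc : ∀ w : List (Fin d), w ∈ L ↔ Nonempty (AcceptingPath M w)) (w : List (Fin d)) :
    w ∈ L ↔ vl M ⬝ᵥ (wordMat M w).mulVec (vr M) ≠ 0 := by
  rw [count_eq, hacc, ← Fintype.card_pos_iff, Nat.cast_ne_zero, Nat.pos_iff_ne_zero]

noncomputable def tau : Matrix (Fin D) (Fin D) ℂ →ₗ[ℂ] ℂ where
  toFun a := vl M ⬝ᵥ a.mulVec (vr M)
  map_add' a b := by simp [Matrix.add_mulVec, dotProduct_add]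
  map_smul' c a := by simp [Matrix.smul_mulVec, dotProduct_smul]

lemma mem_closure_eq (m : Matrix (Fin D) (Fin D) ℂ)
    (hm : m ∈ Submonoid.closure (Set.range (nfaMatC M))) :
    ∃ w : List (Fin d), m = wordMat M w := by
  induction hm using Submonoid.closure_induction with
  | mem x hx =>
    obtain ⟨a, rfl⟩ := hx
    exact ⟨[a], by simp [wordMat]⟩
  | one => exact ⟨[], rfl⟩
  | mul a b ha hb iha ihb =>
    obtain ⟨u, rfl⟩ := iha
    obtain ⟨v, rfl⟩ := ihb
    exact ⟨u ++ v, (wordMat_append M u v).symm⟩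

lemma wordMat_mem_adjoin (w : List (Fin d)) :
    wordMat M w ∈ Algebra.adjoin ℂ (Set.range (nfaMatC M)) := by
  induction w with
  | nil => simpa using one_mem (Algebra.adjoin ℂ (Set.range (nfaMatC M)))
  | cons x w ih =>
    rw [wordMat_cons]
    exact mul_mem (Algebra.subset_adjoin ⟨x, rfl⟩) ih

lemma word_comm (L : Set (List (Fin d)))
    (hacc : ∀ w : List (Fin d), w ∈ L ↔ Nonempty (AcceptingPath M w))
    (hufa : ∀ w : List (Fin d), Subsingleton (AcceptingPath M w))
    (hshift : ∀ u v : List (Fin d), u ++ v ∈ L → v ++ u ∈ L)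
    (u v : List (Fin d)) :
    tau M (wordMat M u * wordMat M v) = tau M (wordMat M v * wordMat M u) := by
  show vl M ⬝ᵥ _ = vl M ⬝ᵥ _
  rw [← wordMat_append, ← wordMat_append, count_eq, count_eq]
  have h1 : Fintype.card (AcceptingPath M (u ++ v)) ≤ 1 :=
    Fintype.card_le_one_iff_subsingleton.mpr (hufa _)
  have h2 : Fintype.card (AcceptingPath M (v ++ u)) ≤ 1 :=
    Fintype.card_le_one_iff_subsingleton.mpr (hufa _)
  have h3 : 0 < Fintype.card (AcceptingPath M (u ++ v)) →
      0 < Fintype.card (AcceptingPath M (v ++ u)) := by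
    intro h
    exact Fintype.card_pos_iff.mpr ((hacc _).mp (hshift u v ((hacc _).mpr (Fintype.card_pos_iff.mp h))))
  have h4 : 0 < Fintype.card (AcceptingPath M (v ++ u)) →
      0 < Fintype.card (AcceptingPath M (u ++ v)) := by
    intro h
    exact Fintype.card_pos_iff.mpr ((hacc _).mp (hshift v u ((hacc _).mpr (Fintype.card_pos_iff.mp h))))
  norm_cast
  omega

end Stmt5Aux

/-- Let `L` be the regular language accepted by an (unambiguous) NFA with matrices
`{A^x}` and boundary vectors `v_l, v_r`.  Then `L` is shift-invariant, i.e.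
`uv ∈ L → vu ∈ L` for all strings `u, v`, iff `v_l [a,b] v_r = 0` for all `a, b` in the
algebra generated by `{A^x}`. -/
theorem stmt5 {d D : ℕ} (M : FinNFA (Fin d) (Fin D)) (L : Set (List (Fin d)))
    (hacc : ∀ w : List (Fin d), w ∈ L ↔ Nonempty (AcceptingPath M w))
    (hufa : ∀ w : List (Fin d), Subsingleton (AcceptingPath M w)) :
    (∀ u v : List (Fin d), u ++ v ∈ L → v ++ u ∈ L) ↔
      (∀ a b : Matrix (Fin D) (Fin D) ℂ,
        a ∈ Algebra.adjoin ℂ (Set.range (nfaMatC M)) →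
        b ∈ Algebra.adjoin ℂ (Set.range (nfaMatC M)) →
        vl M ⬝ᵥ (a * b - b * a).mulVec (vr M) = 0) := by
  constructor
  · intro hshift a b ha hb
    rw [← Subalgebra.mem_toSubmodule, Algebra.adjoin_eq_span] at ha hb
    have key2 : Stmt5Aux.tau M (a * b) = Stmt5Aux.tau M (b * a) := by
      refine Submodule.span_induction₂
        (p := fun x y _ _ => Stmt5Aux.tau M (x * y) = Stmt5Aux.tau M (y * x)) ?_ ?_ ?_ ?_ ?_ ?_ ?_ ha hb
      · intro x y hx hy
        obtain ⟨u, rfl⟩ := Stmt5Aux.mem_closure_eq M x hx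
        obtain ⟨v, rfl⟩ := Stmt5Aux.mem_closure_eq M y hy
        exact Stmt5Aux.word_comm M L hacc hufa hshift u v
      · intro y _; simp
      · intro x _; simp
      · intro x y z _ _ _ h1 h2; simp [add_mul, mul_add, map_add, h1, h2]
      · intro x y z _ _ _ h1 h2; simp [add_mul, mul_add, map_add, h1, h2]
      · intro r x y _ _ h; simp [smul_mul_assoc, mul_smul_comm, _root_.map_smul, h]
      · intro r x y _ _ h; simp [smul_mul_assoc, mul_smul_comm, _root_.map_smul, h]
    have hsub : vl M ⬝ᵥ (a * b - b * a).mulVec (vr M) = Stmt5Aux.tau M (a * b) - Stmt5Aux.tau M (b * a) := by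
      simp [Stmt5Aux.tau, Matrix.sub_mulVec, dotProduct_sub]
    rw [hsub, key2, sub_self]
  · intro hcomm u v huv
    have h0 := hcomm _ _ (Stmt5Aux.wordMat_mem_adjoin M u) (Stmt5Aux.wordMat_mem_adjoin M v)
    have heq : vl M ⬝ᵥ (Stmt5Aux.wordMat M (u ++ v)).mulVec (vr M)
        = vl M ⬝ᵥ (Stmt5Aux.wordMat M (v ++ u)).mulVec (vr M) := by
      rw [Stmt5Aux.wordMat_append, Stmt5Aux.wordMat_append]
      rw [Matrix.sub_mulVec, dotProduct_sub, sub_eq_zero] at h0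
      exact h0
    rw [Stmt5Aux.mem_iff M L hacc] at huv ⊢
    rw [← heq]
    exact huv
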